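/- Every pointed finitely complete majority category is anticommutative. -/

import Mathlib

open CategoryTheory CategoryTheory.Limits

universe v u

variable {C : Type u} [Category.{v} C]

/-- Two morphisms `f : X ⟶ Z` and `g : Y ⟶ Z` in a pointed category are *disjoint*
if whenever `x ≫ f = y ≫ g` then both composites are zero. -/
def CategoryTheory.AreDisjoint [HasZeroMorphisms C]
    {X Y Z : C} (f : X ⟶ Z) (g : Y ⟶ Z) : Prop :=
  ∀ ⦃S : C⦄ (x : S ⟶ X) (y : S ⟶ Y), x ≫ f = y ≫ g → x ≫ f = 0 ∧ y ≫ g = 0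

/-- Two morphisms `f : X ⟶ Z` and `g : Y ⟶ Z` *commute in the sense of Huq* if there
is a cooperator `ρ : X ⨯ Y ⟶ Z` restricting to `f` and `g` along the product inclusions. -/
def CategoryTheory.HuqCommute [HasZeroMorphisms C] [HasBinaryProducts C]
    {X Y Z : C} (f : X ⟶ Z) (g : Y ⟶ Z) : Prop :=
  ∃ ρ : X ⨯ Y ⟶ Z, prod.lift (𝟙 X) 0 ≫ ρ = f ∧ prod.lift 0 (𝟙 Y) ≫ ρ = g

/-- A pointed category with binary products is *anticommutative* if every pair of
commuting morphisms is disjoint. -/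
def CategoryTheory.Anticommutative (C : Type u) [Category.{v} C]
    [HasZeroMorphisms C] [HasBinaryProducts C] : Prop :=
  ∀ ⦃X Y Z : C⦄ (f : X ⟶ Z) (g : Y ⟶ Z), HuqCommute f g → AreDisjoint f g

/-- A finitely complete category is a *majority category* if for every internal ternary
relation `r : R₀ ⟶ X ⨯ Y ⨯ Z` and generalized elements as below, whenever
`(x', y, z)`, `(x, y', z)` and `(x, y, z')` all factor through `r`, so does `(x, y, z)`. -/
def CategoryTheory.IsMajorityCategory (C : Type u) [Category.{v} C]
    [HasBinaryProducts C] : Prop :=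
  ∀ ⦃R₀ X Y Z : C⦄ (r : R₀ ⟶ X ⨯ Y ⨯ Z), Mono r →
    ∀ ⦃S : C⦄ (x x' : S ⟶ X) (y y' : S ⟶ Y) (z z' : S ⟶ Z),
      (∃ u : S ⟶ R₀, u ≫ r = prod.lift x' (prod.lift y z)) →
      (∃ u : S ⟶ R₀, u ≫ r = prod.lift x (prod.lift y' z)) →
      (∃ u : S ⟶ R₀, u ≫ r = prod.lift x (prod.lift y z')) →
      ∃ u : S ⟶ R₀, u ≫ r = prod.lift x (prod.lift y z)

/-- Every pointed finitely complete majority category is anticommutative. -/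
theorem anticommutative_of_majority [HasZeroObject C] [HasZeroMorphisms C]
    [HasFiniteLimits C] (h : IsMajorityCategory C) :
    Anticommutative C := by
  rintro X Y Z f g ⟨ρ, hf, hg⟩ S x y hxy
  set t : S ⟶ Z := x ≫ f with ht
  -- the "graph" relation of ρ
  set r : X ⨯ Y ⟶ X ⨯ (Y ⨯ Z) := prod.lift prod.fst (prod.lift prod.snd ρ) with hr
  have hmono : Mono r := by
    constructor
    intro W a b e
    apply Limits.prod.hom_ext
    · have := congrArg (· ≫ prod.fst) e
      simpa [hr, prod.lift_fst, prod.lift_snd, prod.lift_fst_assoc, prod.lift_snd_assoc] using this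
    · have := congrArg (· ≫ prod.snd ≫ prod.fst) e
      simpa [hr, prod.lift_fst, prod.lift_snd, prod.lift_fst_assoc, prod.lift_snd_assoc] using this
  have h1 : ∃ u : S ⟶ X ⨯ Y, u ≫ r = prod.lift x (prod.lift 0 t) := by
    refine ⟨prod.lift x 0, ?_⟩
    have hx : prod.lift x (0 : S ⟶ Y) ≫ ρ = t := by
      have : prod.lift x (0 : S ⟶ Y) = x ≫ prod.lift (𝟙 X) 0 := by
        apply Limits.prod.hom_ext <;> simp
      rw [this, Category.assoc, hf, ht]
    apply Limits.prod.hom_ext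
    · simp [hr, prod.lift_fst, prod.lift_snd, prod.lift_fst_assoc, prod.lift_snd_assoc]
    · apply Limits.prod.hom_ext <;> simp [hr, prod.lift_fst, prod.lift_snd, prod.lift_fst_assoc, prod.lift_snd_assoc, hx]
  have h2 : ∃ u : S ⟶ X ⨯ Y, u ≫ r = prod.lift 0 (prod.lift y t) := by
    refine ⟨prod.lift 0 y, ?_⟩
    have hy : prod.lift (0 : S ⟶ X) y ≫ ρ = t := by
      have : prod.lift (0 : S ⟶ X) y = y ≫ prod.lift 0 (𝟙 Y) := by
        apply Limits.prod.hom_ext <;> simp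
      rw [this, Category.assoc, hg, ← hxy, ht]
    apply Limits.prod.hom_ext
    · simp [hr, prod.lift_fst, prod.lift_snd, prod.lift_fst_assoc, prod.lift_snd_assoc]
    · apply Limits.prod.hom_ext <;> simp [hr, prod.lift_fst, prod.lift_snd, prod.lift_fst_assoc, prod.lift_snd_assoc, hy]
  have h3 : ∃ u : S ⟶ X ⨯ Y, u ≫ r = prod.lift 0 (prod.lift 0 0) := by
    refine ⟨0, ?_⟩
    apply Limits.prod.hom_ext
    · simp [hr]
    · apply Limits.prod.hom_ext <;> simp [hr]
  obtain ⟨u, hu⟩ := h r hmono 0 x 0 y t 0 h1 h2 h3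
  have hufst : u ≫ prod.fst = 0 := by
    have := congrArg (· ≫ prod.fst) hu
    simpa [hr, prod.lift_fst, prod.lift_snd, prod.lift_fst_assoc, prod.lift_snd_assoc] using this
  have husnd : u ≫ prod.snd = 0 := by
    have := congrArg (· ≫ prod.snd ≫ prod.fst) hu
    simpa [hr, prod.lift_fst, prod.lift_snd, prod.lift_fst_assoc, prod.lift_snd_assoc] using this
  have hu0 : u = 0 := by
    apply Limits.prod.hom_ext <;> simp [hufst, husnd]
  have hut : u ≫ ρ = t := by
    have := congrArg (· ≫ prod.snd ≫ prod.snd) hu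
    simpa [hr, prod.lift_fst, prod.lift_snd, prod.lift_fst_assoc, prod.lift_snd_assoc] using this
  have ht0 : t = 0 := by rw [← hut, hu0, zero_comp]
  exact ⟨ht0, by rw [← hxy]; exact ht0⟩
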